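/- Fix a probability space (Ω, F, P), an event A ∈ F, and n ≥ 1 sub-σ-algebras G_1, ..., G_n ⊆ F. Setting X_i = E[1_A | G_i] for i = 1, ..., n, one has (1/2) Σ_{i≠j} E|X_i - X_j|² ≤ (n²/4) · P(A)(1 - P(A)). -/

import Mathlib

open MeasureTheory ProbabilityTheory Filter

lemma sum_offDiag_sq (n : ℕ) (x : Fin n → ℝ) :
    (1/2:ℝ) * ∑ p ∈ Finset.univ.offDiag, |x p.1 - x p.2|^2
      = n * ∑ i, x i * x i - (∑ i, x i) * (∑ i, x i) := by
  have h1 : ∑ p ∈ (Finset.univ : Finset (Fin n)).offDiag, |x p.1 - x p.2|^2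
      = ∑ p ∈ (Finset.univ ×ˢ Finset.univ), (x p.1 - x p.2)^2 := by
    refine (Finset.sum_congr rfl (fun p _ => sq_abs _)).trans ?_
    refine Finset.sum_subset (fun p hp => ?_) (fun p hp hnp => ?_)
    · simp
    · have : p.1 = p.2 := by
        by_contra h
        exact hnp (Finset.mem_offDiag.2 ⟨Finset.mem_univ _, Finset.mem_univ _, h⟩)
      simp [this]
  rw [h1, Finset.sum_product]
  have h2 : ∀ i j : Fin n, (x i - x j)^2 = x i * x i + x j * x j - 2*(x i * x j) := by
    intros; ring
  simp_rw [h2, Finset.sum_sub_distrib, Finset.sum_add_distrib, Finset.sum_const,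
    ← Finset.mul_sum, ← Finset.sum_mul, Finset.card_univ, Fintype.card_fin, nsmul_eq_mul]
  rw [← Finset.mul_sum]
  ring

theorem sum_sq_diff_condexp_le {Ω : Type} [m0 : MeasurableSpace Ω] (μ : Measure Ω)
    [IsProbabilityMeasure μ] (A : Set Ω) (hA : MeasurableSet A)
    (n : ℕ) (hn : 1 ≤ n) (G : Fin n → MeasurableSpace Ω) (hG : ∀ i, G i ≤ m0) :
    (1 / 2 : ℝ) * ∑ p ∈ Finset.univ.offDiag,
        ∫ ω, |(μ[A.indicator (fun _ => (1 : ℝ)) | G p.1]) ω -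
              (μ[A.indicator (fun _ => (1 : ℝ)) | G p.2]) ω| ^ 2 ∂μ ≤
      (n : ℝ) ^ 2 / 4 * ((μ A).toReal * (1 - (μ A).toReal)) := by
  set I : Ω → ℝ := A.indicator (fun _ => (1:ℝ)) with hIdef
  set P : ℝ := (μ A).toReal with hpdef
  set X : Fin n → Ω → ℝ := fun i => μ[I | G i] with hXdef
  set S : Ω → ℝ := fun ω => ∑ i, X i ω with hSdef
  have hImeas : AEStronglyMeasurable I μ :=
    (stronglyMeasurable_const.indicator hA).aestronglyMeasurable
  have hIbd : ∀ ω, ‖I ω‖ ≤ 1 := by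
    intro ω
    by_cases hω : ω ∈ A <;> simp [hIdef, hω]
  have hIint : Integrable I μ := (integrable_const (1:ℝ)).indicator hA
  have hXint : ∀ i, Integrable (X i) μ := fun i => integrable_condExp
  have hXmeas : ∀ i, AEStronglyMeasurable (X i) μ := fun i =>
    (stronglyMeasurable_condExp.mono (hG i)).aestronglyMeasurable
  have hXbd : ∀ i, ∀ᵐ ω ∂μ, ‖X i ω‖ ≤ 1 := by
    intro i
    have h0 : 0 ≤ᵐ[μ] X i := condExp_nonneg (by
      filter_upwards with ω
      by_cases hω : ω ∈ A <;> simp [hIdef, hω])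
    have h1 : X i ≤ᵐ[μ] μ[(fun _ => (1:ℝ)) | G i] :=
      condExp_mono hIint (integrable_const 1) (by
        filter_upwards with ω
        by_cases hω : ω ∈ A <;> simp [hIdef, hω])
    have h2 : μ[(fun _ => (1:ℝ)) | G i] = fun _ => (1:ℝ) := condExp_const (hG i) 1
    rw [h2] at h1
    filter_upwards [h0, h1] with ω hω0 hω1
    simp only [Pi.zero_apply] at hω0
    rw [Real.norm_eq_abs, abs_le]
    exact ⟨by linarith, hω1⟩
  have hXX : ∀ i j, Integrable (fun ω => X i ω * X j ω) μ := fun i j =>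
    (hXint j).bdd_mul (hXmeas i) (hXbd i)
  have hIX : ∀ i, Integrable (fun ω => I ω * X i ω) μ := fun i =>
    (hXint i).bdd_mul hImeas (Eventually.of_forall hIbd)
  have hII : Integrable (fun ω => I ω * I ω) μ :=
    hIint.bdd_mul hImeas (Eventually.of_forall hIbd)
  have hSint : Integrable S μ := integrable_finset_sum _ (fun i _ => hXint i)
  have hSbd : ∀ᵐ ω ∂μ, ‖S ω‖ ≤ (n:ℝ) := by
    filter_upwards [ae_all_iff.2 hXbd] with ω hω
    calc ‖S ω‖ ≤ ∑ i, ‖X i ω‖ := norm_sum_le _ _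
      _ ≤ ∑ _i : Fin n, (1:ℝ) := Finset.sum_le_sum (fun i _ => hω i)
      _ = (n:ℝ) := by simp
  have hSS : Integrable (fun ω => S ω * S ω) μ :=
    hSint.bdd_mul hSint.aestronglyMeasurable hSbd
  have hIS : Integrable (fun ω => I ω * S ω) μ :=
    hSint.bdd_mul hImeas (Eventually.of_forall hIbd)
  -- integral values
  have intI : ∫ ω, I ω ∂μ = P := by
    rw [hIdef, integral_indicator_const (1:ℝ) hA]; simp [hpdef, measureReal_def]
  have intII : ∫ ω, I ω * I ω ∂μ = P := by
    rw [← intI]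
    refine integral_congr_ae (Eventually.of_forall fun ω => ?_)
    by_cases hω : ω ∈ A <;> simp [hIdef, hω]
  have intX : ∀ i, ∫ ω, X i ω ∂μ = P := fun i => by
    rw [hXdef]
    simp only
    rw [integral_condExp (hG i), intI]
  have intS : ∫ ω, S ω ∂μ = (n:ℝ) * P := by
    simp only [hSdef]
    rw [integral_finset_sum _ (fun i _ => hXint i)]
    simp [intX]
  have key : ∀ i, ∫ ω, I ω * X i ω ∂μ = ∫ ω, X i ω * X i ω ∂μ := by
    intro i
    have hint : Integrable (X i * I) μ := by
      have h' : Integrable (fun ω => X i ω * I ω) μ := by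
        simpa [mul_comm] using hIX i
      exact h'
    have h1 : μ[X i * I | G i] =ᵐ[μ] X i * μ[I | G i] :=
      condExp_mul_of_stronglyMeasurable_left stronglyMeasurable_condExp hint hIint
    calc ∫ ω, I ω * X i ω ∂μ = ∫ ω, (X i * I) ω ∂μ := by
          refine integral_congr_ae (Eventually.of_forall fun ω => ?_)
          simp [mul_comm]
      _ = ∫ ω, (μ[X i * I | G i]) ω ∂μ := (integral_condExp (hG i)).symm
      _ = ∫ ω, (X i * μ[I | G i]) ω ∂μ := integral_congr_ae h1
      _ = ∫ ω, X i ω * X i ω ∂μ := rfl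
  set Q : ℝ := ∑ i, ∫ ω, X i ω * X i ω ∂μ with hQdef
  set T : ℝ := ∫ ω, S ω * S ω ∂μ with hTdef
  have intIS : ∫ ω, I ω * S ω ∂μ = Q := by
    calc ∫ ω, I ω * S ω ∂μ = ∫ ω, ∑ i, I ω * X i ω ∂μ := by
          refine integral_congr_ae (Eventually.of_forall fun ω => ?_)
          simp [hSdef, Finset.mul_sum]
      _ = ∑ i, ∫ ω, I ω * X i ω ∂μ := integral_finset_sum _ (fun i _ => hIX i)
      _ = Q := Finset.sum_congr rfl (fun i _ => key i)
  -- LHS transformation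
  have hdiffint : ∀ (i j : Fin n), Integrable (fun ω => |X i ω - X j ω|^2) μ := by
    intro i j
    have he : (fun ω => |X i ω - X j ω|^2)
        = fun ω => (X i ω * X i ω + X j ω * X j ω) - 2*(X i ω * X j ω) := by
      funext ω; rw [sq_abs]; ring
    rw [he]
    exact ((hXX i i).add (hXX j j)).sub ((hXX i j).const_mul 2)
  have hsumsq_int : Integrable (fun ω => ∑ i, X i ω * X i ω) μ :=
    integrable_finset_sum _ (fun i _ => hXX i i)
  have hnsumsq_int : Integrable (fun ω => (n:ℝ) * ∑ i, X i ω * X i ω) μ :=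
    hsumsq_int.const_mul _
  have hLHS : (1/2:ℝ) * ∑ pr ∈ Finset.univ.offDiag, ∫ ω, |X pr.1 ω - X pr.2 ω|^2 ∂μ
      = (n:ℝ) * Q - T := by
    rw [← integral_finset_sum _ (fun pr _ => hdiffint pr.1 pr.2), ← integral_const_mul]
    have he : ∀ ω, (1/2:ℝ) * ∑ pr ∈ Finset.univ.offDiag, |X pr.1 ω - X pr.2 ω|^2
        = (n:ℝ) * (∑ i, X i ω * X i ω) - S ω * S ω := fun ω =>
      sum_offDiag_sq n (fun i => X i ω)
    rw [integral_congr_ae (Eventually.of_forall he), integral_sub hnsumsq_int hSS,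
      integral_const_mul, integral_finset_sum _ (fun i _ => hXX i i)]
  -- positivity and expansion of ∫ Y²
  have i1 : Integrable (fun ω => ((n:ℝ)/2)^2 * (I ω * I ω)) μ := hII.const_mul _
  have i2 : Integrable (fun ω => (2*((n:ℝ)/2)*((n:ℝ)/2*P)) * I ω) μ := hIint.const_mul _
  have i5 : Integrable (fun ω => 2*((n:ℝ)/2) * (I ω * S ω)) μ := hIS.const_mul _
  have i6 : Integrable (fun ω => (2*((n:ℝ)/2*P)) * S ω) μ := hSint.const_mul _
  have i12 : Integrable (fun ω => ((n:ℝ)/2)^2 * (I ω * I ω) + S ω * S ω) μ := by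
    exact i1.add hSS
  have i123 : Integrable (fun ω => ((n:ℝ)/2)^2 * (I ω * I ω) + S ω * S ω
      + (2*((n:ℝ)/2)*((n:ℝ)/2*P)) * I ω) μ := by
    exact i12.add i2
  have i1234 : Integrable (fun ω => ((n:ℝ)/2)^2 * (I ω * I ω) + S ω * S ω
      + (2*((n:ℝ)/2)*((n:ℝ)/2*P)) * I ω + ((n:ℝ)/2*P)^2) μ := by
    exact i123.add (integrable_const _)
  have i56 : Integrable (fun ω => 2*((n:ℝ)/2) * (I ω * S ω) + (2*((n:ℝ)/2*P)) * S ω) μ := by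
    exact i5.add i6
  have hYnn : (0:ℝ) ≤ ∫ ω, ((n:ℝ)/2 * I ω - S ω + (n:ℝ)/2 * P)^2 ∂μ :=
    integral_nonneg (fun ω => sq_nonneg _)
  have hYexp : ∫ ω, ((n:ℝ)/2 * I ω - S ω + (n:ℝ)/2 * P)^2 ∂μ
      = (((n:ℝ)/2)^2 * P + T + (2*((n:ℝ)/2)*((n:ℝ)/2*P)) * P + ((n:ℝ)/2*P)^2)
        - (2*((n:ℝ)/2) * Q + (2*((n:ℝ)/2*P)) * ((n:ℝ)*P)) := by
    have hptw : ∀ ω, ((n:ℝ)/2 * I ω - S ω + (n:ℝ)/2 * P)^2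
        = (((n:ℝ)/2)^2 * (I ω * I ω) + S ω * S ω + (2*((n:ℝ)/2)*((n:ℝ)/2*P)) * I ω
            + ((n:ℝ)/2*P)^2
          - (2*((n:ℝ)/2) * (I ω * S ω) + (2*((n:ℝ)/2*P)) * S ω)) := fun ω => by ring
    rw [integral_congr_ae (Eventually.of_forall hptw), integral_sub i1234 i56,
      integral_add i123 (integrable_const _), integral_add i12 i2, integral_add i1 hSS,
      integral_add i5 i6, integral_const_mul, integral_const_mul, integral_const_mul,
      integral_const_mul, integral_const, intII, intI, intIS, intS]
    simp [hTdef]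
  -- conclude
  have hP0 : (0:ℝ) ≤ P := ENNReal.toReal_nonneg
  have hmain : (n:ℝ) * Q - T ≤ (n:ℝ)^2/4 * (P * (1 - P)) := by
    rw [hYexp] at hYnn
    nlinarith [hYnn]
  calc (1 / 2 : ℝ) * ∑ pr ∈ Finset.univ.offDiag,
        ∫ ω, |X pr.1 ω - X pr.2 ω| ^ 2 ∂μ
      = (n:ℝ) * Q - T := hLHS
    _ ≤ (n:ℝ)^2/4 * (P * (1 - P)) := hmain
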